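/- For n ≤ −1, the function F_n(x,t) = ((−1)^n/2πi) ∮_{Γ_0} dw (1−w)^{−n} w^{−(x−n+1)} e^{t(w−1)} (contour around 0 only, since there is no pole at 1) satisfies F_{n+1}(x,t) = −Σ_{y < x} F_n(y,t), with the sum over y < x being finite because F_n(y,t) = 0 for y < n. -/

import Mathlib

open Complex

/-- `F_n(x,t) = ((−1)^n/2πi) ∮ dw (1−w)^{−n} w^{−(x−n+1)} e^{t(w−1)}`, the contour being a
counterclockwise circle of radius `R` around the origin. -/
noncomputable def Fker (R : ℝ) (n x : ℤ) (t : ℝ) : ℂ :=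
  (-1 : ℂ) ^ n / (2 * Real.pi * I) *
    ∮ w in C(0, R), (1 - w) ^ (-n) * w ^ (-(x - n + 1)) * Complex.exp (t * (w - 1))

/-- For `n ≤ −1` and a contour enclosing only `0` (radius `0 < R < 1`): `F_n(y,t) = 0` for
`y < n`, and `F_{n+1}(x,t) = −Σ_{y<x} F_n(y,t)` (the sum over `y < x` being finite,
reducing to `y ∈ [n, x)`). -/
lemma Fker_eq_zero (R : ℝ) (hR0 : 0 ≤ R) (n x : ℤ) (hn : n ≤ 0) (hx : x + 1 ≤ n) (t : ℝ) :
    Fker R n x t = 0 := by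
  unfold Fker
  rw [show (∮ w in C(0, R), (1 - w) ^ (-n) * w ^ (-(x - n + 1)) * Complex.exp (t * (w - 1)))
      = 0 from ?_, mul_zero]
  obtain ⟨m, hm⟩ : ∃ m : ℕ, -n = (m : ℤ) := ⟨(-n).toNat, (Int.toNat_of_nonneg (by omega)).symm⟩
  obtain ⟨k, hk⟩ : ∃ k : ℕ, -(x - n + 1) = (k : ℤ) :=
    ⟨(-(x - n + 1)).toNat, (Int.toNat_of_nonneg (by omega)).symm⟩
  rw [show (∮ w in C(0, R), (1 - w) ^ (-n) * w ^ (-(x - n + 1)) * Complex.exp (t * (w - 1)))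
      = ∮ w in C(0, R), (1 - w) ^ m * w ^ k * Complex.exp (t * (w - 1)) from ?_]
  · refine circleIntegral_eq_zero_of_differentiable_on_off_countable hR0
      Set.countable_empty ?_ ?_
    · have hd : Differentiable ℂ fun w : ℂ => (1 - w) ^ m * w ^ k * Complex.exp (t * (w - 1)) :=
        by fun_prop
      exact hd.continuous.continuousOn
    · intro z _
      have hd : Differentiable ℂ fun w : ℂ => (1 - w) ^ m * w ^ k * Complex.exp (t * (w - 1)) :=
        by fun_prop
      exact hd z
  · refine circleIntegral.integral_congr hR0 fun w _ => ?_
    rw [hm, hk, zpow_natCast, zpow_natCast]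

lemma integrand_integrable (R : ℝ) (hR0 : 0 < R) (hR1 : R < 1) (a b : ℤ) (t : ℝ) :
    CircleIntegrable (fun w : ℂ => (1 - w) ^ a * w ^ b * Complex.exp (t * (w - 1))) 0 R := by
  refine ContinuousOn.circleIntegrable hR0.le ?_
  refine ContinuousOn.mul (ContinuousOn.mul ?_ ?_) ?_
  · refine ContinuousOn.zpow₀ (continuousOn_const.sub continuousOn_id) a fun w hw => Or.inl ?_
    have hnorm : ‖w‖ = R := by simpa using hw
    intro h
    have h' : (1 : ℂ) - w = 0 := h
    have hw1 : w = 1 := by linear_combination -h'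
    rw [hw1] at hnorm; simp at hnorm; linarith
  · refine ContinuousOn.zpow₀ continuousOn_id b fun w hw => Or.inl ?_
    have hnorm : ‖w‖ = R := by simpa using hw
    intro h
    simp only [id_eq] at h
    rw [h] at hnorm; simp at hnorm; linarith
  · exact (Complex.continuous_exp.comp (by continuity)).continuousOn

lemma Fker_step (R : ℝ) (hR0 : 0 < R) (hR1 : R < 1) (n x : ℤ) (t : ℝ) :
    Fker R (n + 1) (x + 1) t = Fker R (n + 1) x t - Fker R n x t := by
  unfold Fker
  have key : (∮ w in C(0, R),
        (1 - w) ^ (-(n + 1)) * w ^ (-(x + 1 - (n + 1) + 1)) * Complex.exp (t * (w - 1)))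
      - (∮ w in C(0, R),
          (1 - w) ^ (-(n + 1)) * w ^ (-(x - (n + 1) + 1)) * Complex.exp (t * (w - 1)))
      = (∮ w in C(0, R),
          (1 - w) ^ (-n) * w ^ (-(x - n + 1)) * Complex.exp (t * (w - 1))) := by
    rw [← circleIntegral.integral_sub (integrand_integrable R hR0 hR1 _ _ t)
      (integrand_integrable R hR0 hR1 _ _ t)]
    refine circleIntegral.integral_congr hR0.le fun w hw => ?_
    have hnorm : ‖w‖ = R := by simpa using hw
    have hw0 : w ≠ 0 := by intro h; rw [h] at hnorm; simp at hnorm; linarith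
    have hw1 : (1 : ℂ) - w ≠ 0 := by
      intro h
      have hq : w = 1 := by linear_combination -h
      rw [hq] at hnorm; simp at hnorm; linarith
    have e1 : w ^ (-(x - (n + 1) + 1)) = w ^ (-(x + 1 - (n + 1) + 1)) * w := by
      rw [← zpow_add_one₀ hw0]; congr 1; ring
    have e2 : (1 - w) ^ (-n) = (1 - w) ^ (-(n + 1)) * (1 - w) := by
      rw [← zpow_add_one₀ hw1]; congr 1; ring
    have e3 : w ^ (-(x - n + 1)) = w ^ (-(x + 1 - (n + 1) + 1)) := by congr 1; ring
    rw [e1, e2, e3]; ring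
  have key2 := eq_add_of_sub_eq key
  rw [key2]
  have hpow : (-1 : ℂ) ^ (n + 1) = (-1) ^ n * (-1) := zpow_add_one₀ (by norm_num) n
  rw [hpow]; ring

theorem Fker_sum_relation (R : ℝ) (hR0 : 0 < R) (hR1 : R < 1)
    (n : ℤ) (hn : n ≤ -1) (x : ℤ) (t : ℝ) :
    (∀ y : ℤ, y < n → Fker R n y t = 0) ∧
      Fker R (n + 1) x t = -(∑ y ∈ Finset.Ico n x, Fker R n y t) := by
  constructor
  · intro y hy
    exact Fker_eq_zero R hR0.le n y (by omega) (by omega) t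
  · have key : ∀ m : ℕ, Fker R (n + 1) (n + m) t
        = -(∑ y ∈ Finset.Ico n (n + (m : ℤ)), Fker R n y t) := by
      intro m
      induction m with
      | zero =>
        simp only [Nat.cast_zero, add_zero, Finset.Ico_self, Finset.sum_empty, neg_zero]
        exact Fker_eq_zero R hR0.le (n + 1) n (by omega) (by omega) t
      | succ m ih =>
        have : (n + ((m : ℤ) + 1)) = (n + m) + 1 := by ring
        have hins : Finset.Ico n (n + (m : ℤ) + 1) = insert (n + (m : ℤ)) (Finset.Ico n (n + (m : ℤ))) := by
          ext y; simp only [Finset.mem_Ico, Finset.mem_insert]; omega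
        rw [Nat.cast_add, Nat.cast_one, this, Fker_step R hR0 hR1 n (n + m) t, ih, hins,
          Finset.sum_insert (by simp)]
        ring
    rcases le_or_gt x n with hx | hx
    · rw [Finset.Ico_eq_empty (by simp; omega), Finset.sum_empty, neg_zero]
      exact Fker_eq_zero R hR0.le (n + 1) x (by omega) (by omega) t
    · have : x = n + ((x - n).toNat : ℤ) := by
        rw [Int.toNat_of_nonneg (by omega)]; ring
      rw [this]; exact key _
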